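/- arXiv:2104.00753 — 8 statements merged into one kernel-verified Lean document; each statement's English description precedes it below -/
import Mathlib

section
/- For every t ≥ 0, the matrix exp(−t e^{(p)}_{(j,j)}) = I + ((e^{−t(1+r_j)} − 1)/(1+r_j)) e^{(p)}_{(j,j)} is a (row-)stochastic matrix: all its entries are nonnegative and every row sums to 1; moreover it leaves p invariant: p · exp(−t e^{(p)}_{(j,j)}) = p. -/
set_option maxHeartbeats 1000000

open Matrix

/-- `r_j := p_j / p_n`, with `n = m+1` and last index `Fin.last m`. -/
noncomputable def rRatio (m : ℕ) (p : Fin (m + 1) → ℝ) (j : Fin m) : ℝ :=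
  p j.castSucc / p (Fin.last m)

/-- `e^{(p)}_{(j,k)} := (e_j - r_j e_n)(e_k^T - e_n^T)` for `j, k ∈ [n-1]`. -/
noncomputable def epBasis (m : ℕ) (p : Fin (m + 1) → ℝ) (j k : Fin m) :
    Matrix (Fin (m + 1)) (Fin (m + 1)) ℝ :=
  Matrix.vecMulVec
    (fun a => (if a = j.castSucc then 1 else 0) -
      rRatio m p j * (if a = Fin.last m then 1 else 0))
    (fun b => (if b = k.castSucc then 1 else 0) - (if b = Fin.last m then 1 else 0))

lemma exp_smul_idem {A : Type*} [NormedRing A] [NormedAlgebra ℝ A] [CompleteSpace A]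
    (P : A) (hP : P * P = P) (x : ℝ) :
    NormedSpace.exp (x • P) = 1 + (Real.exp x - 1) • P := by
  have hpow : ∀ n : ℕ, P ^ (n + 1) = P := by
    intro n
    induction n with
    | zero => simp
    | succ k ih => rw [pow_succ, ih, hP]
  have hsum : Summable fun n : ℕ => ((n.factorial : ℝ))⁻¹ • (x • P) ^ n :=
    NormedSpace.expSeries_summable' (𝕂 := ℝ) (x • P)
  rw [NormedSpace.exp_eq_tsum (𝕂 := ℝ)]
  simp only []
  rw [Summable.tsum_eq_zero_add hsum]
  have h1 : ((Nat.factorial 0 : ℝ))⁻¹ • (x • P) ^ 0 = (1 : A) := by simp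
  rw [h1]
  have h2 : ∀ n : ℕ, ((((n + 1).factorial : ℕ) : ℝ))⁻¹ • (x • P) ^ (n + 1)
      = ((((n + 1).factorial : ℕ) : ℝ)⁻¹ * x ^ (n + 1)) • P := by
    intro n
    rw [smul_pow, smul_smul, hpow]
  simp only [h2]
  have hsR : Summable fun n : ℕ => (((n.factorial : ℕ) : ℝ))⁻¹ * x ^ n := by
    simpa [smul_eq_mul] using NormedSpace.expSeries_summable' (𝕂 := ℝ) (x : ℝ)
  have hs2 : Summable fun n : ℕ => ((((n + 1).factorial : ℕ) : ℝ))⁻¹ * x ^ (n + 1) :=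
    (summable_nat_add_iff 1).2 hsR
  rw [Summable.tsum_smul_const hs2]
  have hexpx : Real.exp x = ∑' n : ℕ, (((n.factorial : ℕ) : ℝ))⁻¹ * x ^ n := by
    rw [Real.exp_eq_exp_ℝ, NormedSpace.exp_eq_tsum (𝕂 := ℝ)]
    simp [smul_eq_mul]
  have := Summable.tsum_eq_zero_add hsR
  rw [← hexpx] at this
  simp only [Nat.factorial_zero, pow_zero] at this
  have : (∑' n : ℕ, ((((n + 1).factorial : ℕ) : ℝ))⁻¹ * x ^ (n + 1)) = Real.exp x - 1 := by
    rw [this]; ring_nf; congr 1; funext n; ring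
  rw [this]

theorem stmt_6 (m : ℕ) (hm : 1 ≤ m) (p : Fin (m + 1) → ℝ)
    (hp : ∀ i, 0 < p i) (hsum : ∑ i, p i = 1) (j : Fin m) (t : ℝ) (ht : 0 ≤ t) :
    NormedSpace.exp (-(t • epBasis m p j j)) =
      1 + ((Real.exp (-(t * (1 + rRatio m p j))) - 1) / (1 + rRatio m p j)) •
        epBasis m p j j ∧
    (∀ a b, 0 ≤ NormedSpace.exp (-(t • epBasis m p j j)) a b) ∧
    (∀ a, ∑ b, NormedSpace.exp (-(t • epBasis m p j j)) a b = 1) ∧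
    Matrix.vecMul p (NormedSpace.exp (-(t • epBasis m p j j))) = p := by
  have hr : 0 < rRatio m p j := div_pos (hp _) (hp _)
  set r : ℝ := rRatio m p j with hr_def
  set c : ℝ := 1 + r with hc_def
  have hc : 0 < c := by positivity
  have hc1 : 1 < c := by simp only [hc_def]; linarith
  have hne : (j.castSucc : Fin (m + 1)) ≠ Fin.last m := (Fin.castSucc_lt_last j).ne
  set u : Fin (m + 1) → ℝ := fun a =>
    (if a = j.castSucc then 1 else 0) - r * (if a = Fin.last m then 1 else 0) with hu_def
  set v : Fin (m + 1) → ℝ := fun b =>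
    (if b = j.castSucc then 1 else 0) - (if b = Fin.last m then 1 else 0) with hv_def
  have hE_def : epBasis m p j j = Matrix.vecMulVec u v := rfl
  -- dot product v ⬝ u = c
  have hvu : ∑ k, v k * u k = c := by
    have hpt : ∀ k, v k * u k =
        (if k = j.castSucc then (1 : ℝ) else 0) + r * (if k = Fin.last m then 1 else 0) := by
      intro k
      by_cases h1 : k = j.castSucc
      · subst h1; simp [hu_def, hv_def, hne]
      · by_cases h2 : k = Fin.last m
        · subst h2; simp [hu_def, hv_def, Ne.symm hne]
        · simp [hu_def, hv_def, h1, h2]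
    rw [Finset.sum_congr rfl fun k _ => hpt k, Finset.sum_add_distrib, ← Finset.mul_sum]
    simp [hc_def]
  have hEE : epBasis m p j j * epBasis m p j j = c • epBasis m p j j := by
    ext a b
    rw [hE_def]
    simp only [Matrix.mul_apply, Matrix.vecMulVec_apply, Matrix.smul_apply, smul_eq_mul]
    calc ∑ k, (u a * v k) * (u k * v b) = (∑ k, v k * u k) * (u a * v b) := by
          rw [Finset.sum_mul]; exact Finset.sum_congr rfl fun k _ => by ring
      _ = c * (u a * v b) := by rw [hvu]
  -- the exponential formula
  have hexp : NormedSpace.exp (-(t • epBasis m p j j)) =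
      1 + ((Real.exp (-(t * c)) - 1) / c) • epBasis m p j j := by
    letI : NormedRing (Matrix (Fin (m + 1)) (Fin (m + 1)) ℝ) := Matrix.linftyOpNormedRing
    letI : NormedAlgebra ℝ (Matrix (Fin (m + 1)) (Fin (m + 1)) ℝ) :=
      Matrix.linftyOpNormedAlgebra
    have hQ : (c⁻¹ • epBasis m p j j) * (c⁻¹ • epBasis m p j j) = c⁻¹ • epBasis m p j j := by
      rw [smul_mul_smul_comm, hEE, smul_smul]
      congr 1
      field_simp
    have hx : -(t • epBasis m p j j) = (-(t * c)) • (c⁻¹ • epBasis m p j j) := by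
      rw [smul_smul, ← neg_smul]
      congr 1
      field_simp
    rw [hx]; erw [exp_smul_idem _ hQ]; rw [smul_smul, div_eq_mul_inv]
  refine ⟨hexp, ?_, ?_, ?_⟩
  · -- nonnegativity of entries
    intro a b
    rw [hexp]
    have he0 : 0 < Real.exp (-(t * c)) := Real.exp_pos _
    have he1 : Real.exp (-(t * c)) ≤ 1 := by
      rw [Real.exp_le_one_iff]
      nlinarith
    set g : ℝ := (Real.exp (-(t * c)) - 1) / c with hg_def
    have hgc : g * c = Real.exp (-(t * c)) - 1 := div_mul_cancel₀ _ hc.ne'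
    rw [hE_def]
    simp only [Matrix.add_apply, Matrix.one_apply, Matrix.smul_apply,
      Matrix.vecMulVec_apply, smul_eq_mul]
    by_cases ha1 : a = j.castSucc
    · subst ha1
      by_cases hb1 : b = j.castSucc
      · subst hb1
        simp [hu_def, hv_def, hne]
        nlinarith
      · by_cases hb2 : b = Fin.last m
        · subst hb2
          simp [hu_def, hv_def, hne, Ne.symm hne]
          nlinarith
        · simp [hu_def, hv_def, hb1, hb2, Ne.symm hb1]
    · by_cases ha2 : a = Fin.last m
      · subst ha2
        by_cases hb1 : b = j.castSucc
        · subst hb1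
          simp [hu_def, hv_def, Ne.symm hne, hne]
          nlinarith
        · by_cases hb2 : b = Fin.last m
          · subst hb2
            simp [hu_def, hv_def, Ne.symm hne]
            nlinarith
          · simp [hu_def, hv_def, hb1, hb2, Ne.symm hb2]
      · simp [hu_def, ha1, ha2]
        split <;> norm_num
  · -- row sums
    intro a
    rw [hexp]
    set g : ℝ := (Real.exp (-(t * c)) - 1) / c with hg_def
    have hv0 : ∑ b, v b = 0 := by
      simp [hv_def, Finset.sum_sub_distrib]
    rw [hE_def]
    simp only [Matrix.add_apply, Matrix.one_apply, Matrix.smul_apply,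
      Matrix.vecMulVec_apply, smul_eq_mul]
    rw [Finset.sum_add_distrib]
    have h1 : ∑ b, (if a = b then (1 : ℝ) else 0) = 1 := by simp
    have h2 : ∑ b, g * (u a * v b) = g * u a * ∑ b, v b := by
      rw [Finset.mul_sum]; exact Finset.sum_congr rfl fun b _ => by ring
    rw [h1, h2, hv0, mul_zero, add_zero]
  · -- p invariance
    rw [hexp]
    set g : ℝ := (Real.exp (-(t * c)) - 1) / c with hg_def
    have hpu : ∑ a, p a * u a = 0 := by
      have hpt : ∀ a, p a * u a =
          (if a = j.castSucc then p j.castSucc else 0) -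
            (if a = Fin.last m then r * p (Fin.last m) else 0) := by
        intro a
        by_cases h1 : a = j.castSucc
        · subst h1; simp [hu_def, hne]
        · by_cases h2 : a = Fin.last m
          · subst h2; simp [hu_def, Ne.symm hne]; ring
          · simp [hu_def, h1, h2]
      rw [Finset.sum_congr rfl fun a _ => hpt a, Finset.sum_sub_distrib]
      simp only [Finset.sum_ite_eq', Finset.mem_univ, if_true]
      rw [hr_def, rRatio, div_mul_cancel₀ _ (hp (Fin.last m)).ne']
      ring
    funext b
    rw [hE_def]
    simp only [Matrix.vecMul, dotProduct, Matrix.add_apply, Matrix.one_apply,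
      Matrix.smul_apply, Matrix.vecMulVec_apply, smul_eq_mul]
    have hpt2 : ∀ a : Fin (m + 1), p a * ((if a = b then (1 : ℝ) else 0) + g * (u a * v b))
        = (if a = b then p a else 0) + (p a * u a) * (g * v b) := by
      intro a; by_cases h : a = b <;> simp [h] <;> ring
    rw [Finset.sum_congr rfl fun a _ => hpt2 a, Finset.sum_add_distrib, ← Finset.sum_mul, hpu,
      zero_mul, add_zero]
    simp
end

section
/- For j ∈ [n-1] and r_j := p_j/p_n > 0, the matrix I − τ e^{(p)}_{(j,j)} is entrywise nonnegative with row sums 1 if and only if 0 ≤ τ ≤ min(1, 1/r_j). Moreover, for τ = min(1, 1/r_j), the (n,j) entry of I − τ e^{(p)}_{(j,j)} equals min(1, r_j) (the Metropolis acceptance ratio). -/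
open Matrix

theorem stmt_8 (m : ℕ) (hm : 1 ≤ m) (p : Fin (m + 1) → ℝ)
    (hp : ∀ i, 0 < p i) (hsum : ∑ i, p i = 1) (j : Fin m) :
    (∀ τ : ℝ,
      ((∀ a b, 0 ≤ (1 - τ • epBasis m p j j) a b) ∧
        (∀ a, ∑ b, (1 - τ • epBasis m p j j) a b = 1)) ↔
      (0 ≤ τ ∧ τ ≤ min 1 (rRatio m p j)⁻¹)) ∧
    (1 - (min 1 (rRatio m p j)⁻¹) • epBasis m p j j) (Fin.last m) j.castSucc =
      min 1 (rRatio m p j) := by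
  have hpn := hp (Fin.last m)
  have hpj := hp j.castSucc
  set r := rRatio m p j with hrdef
  have hr : 0 < r := div_pos hpj hpn
  have hne : (j.castSucc : Fin (m + 1)) ≠ Fin.last m :=
    Fin.ne_of_lt (Fin.castSucc_lt_last j)
  have hent : ∀ (τ : ℝ) a b, (1 - τ • epBasis m p j j) a b =
      (if a = b then (1 : ℝ) else 0) -
        τ * (((if a = j.castSucc then (1 : ℝ) else 0) -
          r * (if a = Fin.last m then 1 else 0)) *
          ((if b = j.castSucc then (1 : ℝ) else 0) - (if b = Fin.last m then 1 else 0))) := by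
    intro τ a b
    simp [Matrix.sub_apply, Matrix.smul_apply, Matrix.one_apply, epBasis,
      Matrix.vecMulVec_apply, smul_eq_mul, hrdef]
  constructor
  · intro τ
    constructor
    · rintro ⟨hnn, -⟩
      have h1 := hnn j.castSucc j.castSucc
      have h2 := hnn (Fin.last m) (Fin.last m)
      have h3 := hnn j.castSucc (Fin.last m)
      rw [hent] at h1 h2 h3
      simp [hne, hne.symm] at h1 h2 h3
      refine ⟨h3, le_min h1 ?_⟩
      nlinarith [mul_inv_cancel₀ (ne_of_gt hr), inv_pos.mpr hr]
    · rintro ⟨h0, hτ⟩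
      have hτ1 : τ ≤ 1 := le_trans hτ (min_le_left _ _)
      have hτr : τ * r ≤ 1 := by
        have := le_trans hτ (min_le_right _ _)
        calc τ * r ≤ r⁻¹ * r := by nlinarith
        _ = 1 := inv_mul_cancel₀ (ne_of_gt hr)
      constructor
      · intro a b
        rw [hent]
        rcases eq_or_ne a j.castSucc with ha | ha <;>
          rcases eq_or_ne a (Fin.last m) with ha' | ha' <;>
          rcases eq_or_ne b j.castSucc with hb | hb <;>
          rcases eq_or_ne b (Fin.last m) with hb' | hb' <;>
          simp [ha, ha', hb, hb', hne, hne.symm] <;>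
          first
          | linarith
          | nlinarith
          | (split <;> norm_num)
      · intro a
        have : ∀ b, (1 - τ • epBasis m p j j) a b =
            (if a = b then (1 : ℝ) else 0) -
              (τ * ((if a = j.castSucc then (1 : ℝ) else 0) -
                r * (if a = Fin.last m then 1 else 0))) *
                (if b = j.castSucc then (1 : ℝ) else 0) +
              (τ * ((if a = j.castSucc then (1 : ℝ) else 0) -
                r * (if a = Fin.last m then 1 else 0))) *
                (if b = Fin.last m then 1 else 0) := by
          intro b; rw [hent]; ring
        rw [Finset.sum_congr rfl fun b _ => this b]
        rw [Finset.sum_add_distrib, Finset.sum_sub_distrib]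
        simp [Finset.sum_ite_eq]
  · rw [hent]
    simp only [if_neg hne.symm, if_pos rfl, if_neg hne, sub_zero, zero_sub]
    rcases le_total r 1 with h | h
    · have : (1:ℝ) ≤ r⁻¹ := (one_le_inv₀ hr).mpr h
      rw [min_eq_left this, min_eq_right h]; norm_num
    · have : r⁻¹ ≤ (1:ℝ) := (inv_le_one₀ hr).mpr h
      rw [min_eq_right this, min_eq_left h]
      norm_num
      field_simp
end

section
/- Let 𝒥 = {j_1,…,j_d} ⊆ [n-1], and for matrices α, β ∈ M_{n-1,n-1}(ℝ) define α^{(p)}_{(𝒥)} := ∑_{u,v=1}^d α_{j_u j_v} e^{(p)}_{(j_u, j_v)} and r_{(𝒥)} := (r_{j_1},…,r_{j_d}) as a row vector. If γ^{(p)}_{(𝒥)} = α^{(p)}_{(𝒥)} β^{(p)}_{(𝒥)}, then the d×d coefficient matrix satisfies γ_{(𝒥)} = α_{(𝒥)} (I + 1 r_{(𝒥)}) β_{(𝒥)}, where 1 is the all-ones column vector in ℝ^d and α_{(𝒥)} is the d×d submatrix (α_{j_u j_v}). -/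
open Matrix

theorem stmt_9 (m : ℕ) (hm : 1 ≤ m) (p : Fin (m + 1) → ℝ)
    (hp : ∀ i, 0 < p i) (hsum : ∑ i, p i = 1)
    (d : ℕ) (J : Fin d → Fin m) (hJ : Function.Injective J)
    (α β γ : Matrix (Fin m) (Fin m) ℝ)
    (h : (∑ u : Fin d, ∑ v : Fin d, γ (J u) (J v) • epBasis m p (J u) (J v)) =
      (∑ u : Fin d, ∑ v : Fin d, α (J u) (J v) • epBasis m p (J u) (J v)) *
      (∑ u : Fin d, ∑ v : Fin d, β (J u) (J v) • epBasis m p (J u) (J v))) :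
    (Matrix.of fun u v : Fin d => γ (J u) (J v)) =
      (Matrix.of fun u v : Fin d => α (J u) (J v)) *
        (1 + Matrix.vecMulVec (fun _ : Fin d => (1 : ℝ))
              (fun u : Fin d => rRatio m p (J u))) *
        (Matrix.of fun u v : Fin d => β (J u) (J v)) := by
  -- row of the α-sum
  have hA : ∀ (a : Fin d) (x : Fin (m + 1)),
      (∑ u : Fin d, ∑ v : Fin d, α (J u) (J v) • epBasis m p (J u) (J v))
          (J a).castSucc x
        = ∑ v : Fin d, α (J a) (J v) *
            ((if x = (J v).castSucc then 1 else 0) -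
              (if x = Fin.last m then 1 else 0)) := by
    intro a x
    simp only [Matrix.sum_apply, Matrix.smul_apply, epBasis, vecMulVec_apply, smul_eq_mul,
      Fin.castSucc_inj, hJ.eq_iff, (Fin.castSucc_lt_last _).ne, if_false, mul_zero, sub_zero]
    rw [Finset.sum_comm]
    simp [Finset.sum_ite_eq', eq_comm (a := a)]
  -- column of the β-sum
  have hB : ∀ (b : Fin d) (x : Fin (m + 1)),
      (∑ u : Fin d, ∑ v : Fin d, β (J u) (J v) • epBasis m p (J u) (J v))
          x (J b).castSucc
        = ∑ u : Fin d, β (J u) (J b) *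
            ((if x = (J u).castSucc then 1 else 0) -
              rRatio m p (J u) * (if x = Fin.last m then 1 else 0)) := by
    intro b x
    simp only [Matrix.sum_apply, Matrix.smul_apply, epBasis, vecMulVec_apply, smul_eq_mul,
      Fin.castSucc_inj, hJ.eq_iff, (Fin.castSucc_lt_last _).ne, if_false, sub_zero]
    refine Finset.sum_congr rfl fun u _ => ?_
    simp [Finset.sum_ite_eq', eq_comm (a := b), mul_comm, mul_left_comm]
  -- the dot product of a column factor and a row factor
  have hdot : ∀ u v : Fin d,
      ∑ x : Fin (m + 1),
        ((if x = (J v).castSucc then 1 else 0) - (if x = Fin.last m then 1 else 0)) *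
          ((if x = (J u).castSucc then (1 : ℝ) else 0) -
            rRatio m p (J u) * (if x = Fin.last m then 1 else 0))
        = (if v = u then 1 else 0) + rRatio m p (J u) := by
    intro u v
    simp only [sub_mul, mul_sub, Finset.sum_sub_distrib, ite_mul, mul_ite, one_mul, mul_one,
      zero_mul, mul_zero, Finset.sum_ite_eq, Finset.mem_univ, if_true]
    simp [Fin.castSucc_inj, hJ.eq_iff, (Fin.castSucc_lt_last _).ne,
      ((Fin.castSucc_lt_last _).ne).symm, eq_comm]
  -- extraction of coefficients from the γ-sum
  have hent : ∀ a b : Fin d,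
      (∑ u : Fin d, ∑ v : Fin d, γ (J u) (J v) • epBasis m p (J u) (J v))
          (J a).castSucc (J b).castSucc = γ (J a) (J b) := by
    intro a b
    simp only [Matrix.sum_apply, Matrix.smul_apply, epBasis, vecMulVec_apply, smul_eq_mul,
      Fin.castSucc_inj, hJ.eq_iff, (Fin.castSucc_lt_last _).ne, if_false, mul_zero, sub_zero]
    rw [Finset.sum_comm]
    simp [Finset.sum_ite_eq', eq_comm (a := a), eq_comm (a := b)]
  -- the key scalar identity
  have key : ∀ a b : Fin d, γ (J a) (J b) =
      ∑ v : Fin d, ∑ u : Fin d, α (J a) (J v) * β (J u) (J b) *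
        ((if v = u then 1 else 0) + rRatio m p (J u)) := by
    intro a b
    have h2 : γ (J a) (J b) =
        ((∑ u : Fin d, ∑ v : Fin d, α (J u) (J v) • epBasis m p (J u) (J v)) *
          (∑ u : Fin d, ∑ v : Fin d, β (J u) (J v) • epBasis m p (J u) (J v)))
          (J a).castSucc (J b).castSucc := by
      rw [← h, hent]
    rw [h2, Matrix.mul_apply]
    simp only [hA, hB]
    rw [show ∀ (f g : Fin d → Fin (m + 1) → ℝ) (A B : Fin d → ℝ),
        (∑ x : Fin (m + 1), (∑ v : Fin d, A v * f v x) * (∑ u : Fin d, B u * g u x))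
          = ∑ v : Fin d, ∑ u : Fin d, A v * B u * ∑ x : Fin (m + 1), f v x * g u x from ?_]
    · refine Finset.sum_congr rfl fun v _ => Finset.sum_congr rfl fun u _ => ?_
      rw [hdot]
    · intro f g A B
      simp only [Finset.sum_mul_sum]
      rw [Finset.sum_comm]
      refine Finset.sum_congr rfl fun v _ => ?_
      rw [Finset.sum_comm]
      refine Finset.sum_congr rfl fun u _ => ?_
      rw [Finset.mul_sum]
      exact Finset.sum_congr rfl fun x _ => by ring
  -- conclude
  ext a b
  rw [Matrix.mul_apply]
  simp only [Matrix.of_apply, Matrix.mul_apply, Matrix.add_apply, Matrix.one_apply,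
    vecMulVec_apply, one_mul, Finset.sum_mul]
  rw [key a b, Finset.sum_comm]
  refine Finset.sum_congr rfl fun u _ => Finset.sum_congr rfl fun v _ => by ring
end

section
/- Let 𝒥 ⊆ [n-1], ω ∈ ℝ, and A := ω ∑_{u,v} (δ_{j_u j_v} − r_{j_v}/(1 + r_{(𝒥)}·1)) e^{(p)}_{(j_u,j_v)}. Then A^{i+1} = ω^i A for all i ≥ 0, and hence exp(tA) = I + ((e^{ωt} − 1)/ω) A for all t ∈ ℝ. -/
open Matrix

lemma key (m : ℕ) (p : Fin (m + 1) → ℝ) (hp : ∀ i, 0 < p i)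
    (d : ℕ) (J : Fin d → Fin m) (hJ : Function.Injective J) :
    (∑ u : Fin d, ∑ v : Fin d,
      ((if J u = J v then (1 : ℝ) else 0) -
        rRatio m p (J v) / (1 + ∑ w : Fin d, rRatio m p (J w))) •
        epBasis m p (J u) (J v)) *
    (∑ u : Fin d, ∑ v : Fin d,
      ((if J u = J v then (1 : ℝ) else 0) -
        rRatio m p (J v) / (1 + ∑ w : Fin d, rRatio m p (J w))) •
        epBasis m p (J u) (J v)) =
    (∑ u : Fin d, ∑ v : Fin d,
      ((if J u = J v then (1 : ℝ) else 0) -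
        rRatio m p (J v) / (1 + ∑ w : Fin d, rRatio m p (J w))) •
        epBasis m p (J u) (J v)) := by
  set s : ℝ := ∑ w : Fin d, rRatio m p (J w) with hs
  have hrpos : ∀ j : Fin m, 0 < rRatio m p j := fun j => div_pos (hp _) (hp _)
  have hspos : (0:ℝ) < 1 + s := by
    have : 0 ≤ s := Finset.sum_nonneg fun w _ => (hrpos _).le
    linarith
  have h1s : (1 + s) ≠ 0 := ne_of_gt hspos
  set X : Matrix (Fin (m+1)) (Fin d) ℝ := Matrix.of fun a u =>
    (if a = (J u).castSucc then 1 else 0) -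
      rRatio m p (J u) * (if a = Fin.last m then 1 else 0) with hX
  set N : Matrix (Fin d) (Fin (m+1)) ℝ := Matrix.of fun v b =>
    (if b = (J v).castSucc then 1 else 0) - (if b = Fin.last m then 1 else 0) with hN
  set C : Matrix (Fin d) (Fin d) ℝ := Matrix.of fun u v =>
    (if J u = J v then (1:ℝ) else 0) - rRatio m p (J v) / (1 + s) with hC
  have hSdef : (∑ u : Fin d, ∑ v : Fin d,
      ((if J u = J v then (1 : ℝ) else 0) - rRatio m p (J v) / (1 + s)) •
        epBasis m p (J u) (J v)) = X * C * N := by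
    ext a b
    simp only [Matrix.sum_apply, Matrix.smul_apply, epBasis, Matrix.vecMulVec_apply,
      smul_eq_mul, Matrix.mul_apply, Finset.sum_mul, Finset.mul_sum, hX, hC, hN,
      Matrix.of_apply]
    rw [Finset.sum_comm]
    exact Finset.sum_congr rfl fun u _ => Finset.sum_congr rfl fun v _ => by ring
  have hNX : ∀ v u, (N * X) v u = (if J v = J u then (1:ℝ) else 0) + rRatio m p (J u) := by
    intro v u
    have hne : (J v).castSucc ≠ Fin.last m := (Fin.castSucc_lt_last _).ne
    have hne' : Fin.last m ≠ (J u).castSucc := (Fin.castSucc_lt_last _).ne'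
    rw [Matrix.mul_apply]
    simp only [hN, hX, Matrix.of_apply, sub_mul]
    rw [Finset.sum_sub_distrib]
    simp [Finset.sum_ite_eq, hne, hne', Fin.castSucc_inj, hJ.eq_iff]
  have hCNX : C * (N * X) = 1 := by
    ext u v
    rw [Matrix.mul_apply]
    simp only [hNX, hC, Matrix.of_apply, mul_add, Finset.sum_add_distrib, sub_mul,
      Finset.sum_sub_distrib]
    have e1 : ∑ w : Fin d, (if J u = J w then (1:ℝ) else 0) * (if J w = J v then 1 else 0)
        = if J u = J v then 1 else 0 := by
      simp [hJ.eq_iff, ite_and, Finset.sum_ite_eq]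
    have e2 : ∑ x : Fin d, rRatio m p (J x) / (1 + s) * (if J x = J v then (1:ℝ) else 0)
        = rRatio m p (J v) / (1 + s) := by
      simp [hJ.eq_iff, mul_ite, Finset.sum_ite_eq']
    have e3 : ∑ x : Fin d, (if J u = J x then (1:ℝ) else 0) * rRatio m p (J v)
        = rRatio m p (J v) := by
      simp [hJ.eq_iff, ite_mul, Finset.sum_ite_eq]
    have e4 : ∑ x : Fin d, rRatio m p (J x) / (1 + s) * rRatio m p (J v)
        = s / (1 + s) * rRatio m p (J v) := by
      rw [← Finset.sum_mul, ← Finset.sum_div]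
    rw [e1, e2, e3, e4, Matrix.one_apply]
    simp only [hJ.eq_iff]
    by_cases h : u = v <;> simp only [h, if_true, if_false] <;> field_simp <;> ring
  have hfinal : X * C * N * (X * C * N) = X * C * N := by
    calc X * C * N * (X * C * N) = X * (C * (N * X)) * (C * N) := by
            simp only [Matrix.mul_assoc]
         _ = X * C * N := by rw [hCNX, Matrix.mul_one, Matrix.mul_assoc]
  rw [hSdef, hfinal]

set_option maxHeartbeats 2000000 in
lemma exp_aux {n : Type*} [Fintype n] [DecidableEq n]
    (A : Matrix n n ℝ) (ω : ℝ) (hω : ω ≠ 0)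
    (hpow : ∀ i : ℕ, A ^ (i + 1) = ω ^ i • A) (t : ℝ) :
    NormedSpace.exp (t • A) = 1 + ((Real.exp (ω * t) - 1) / ω) • A := by
  letI : SeminormedRing (Matrix n n ℝ) := Matrix.linftyOpSemiNormedRing
  letI : NormedRing (Matrix n n ℝ) := Matrix.linftyOpNormedRing
  letI : NormedAlgebra ℝ (Matrix n n ℝ) := Matrix.linftyOpNormedAlgebra
  have hsum : Summable (fun k : ℕ => ((k.factorial : ℝ))⁻¹ • (t • A) ^ k) :=
    NormedSpace.expSeries_summable' (𝕂 := ℝ) (t • A)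
  rw [NormedSpace.exp_eq_tsum (𝕂 := ℝ)]
  show (∑' k : ℕ, ((k.factorial : ℝ))⁻¹ • (t • A) ^ k) = _
  rw [hsum.tsum_eq_zero_add]
  have h1 : ∀ k : ℕ, (((k+1).factorial : ℝ))⁻¹ • (t • A) ^ (k + 1)
      = (ω⁻¹ * ((((k+1).factorial : ℝ))⁻¹ * (ω * t) ^ (k + 1))) • A := by
    intro k
    rw [smul_pow, hpow, smul_smul, smul_smul]
    congr 1
    field_simp
    ring
  have hsumR : Summable (fun k : ℕ => ((k.factorial : ℝ))⁻¹ * (ω * t) ^ k) := by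
    simpa [smul_eq_mul] using NormedSpace.expSeries_summable' (𝕂 := ℝ) (ω * t)
  have hsumR' : Summable (fun k : ℕ => (((k+1).factorial : ℝ))⁻¹ * (ω * t) ^ (k + 1)) :=
    (summable_nat_add_iff 1).mpr hsumR
  have hsumR'' : Summable (fun k : ℕ => ω⁻¹ * ((((k+1).factorial : ℝ))⁻¹ * (ω * t) ^ (k + 1))) :=
    hsumR'.mul_left _
  have hexp : Real.exp (ω * t) = ∑' k : ℕ, ((k.factorial : ℝ))⁻¹ * (ω * t) ^ k := by
    simp only [Real.exp_eq_exp_ℝ, NormedSpace.exp_eq_tsum (𝕂 := ℝ), smul_eq_mul]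
  have hshift : (∑' k : ℕ, (((k+1).factorial : ℝ))⁻¹ * (ω * t) ^ (k + 1))
      = Real.exp (ω * t) - 1 := by
    have h := hsumR.tsum_eq_zero_add
    rw [← hexp] at h
    simp only [Nat.factorial_zero, Nat.cast_one, inv_one, pow_zero, one_mul] at h
    linarith
  rw [tsum_congr h1, hsumR''.tsum_smul_const, tsum_mul_left, hshift]
  congr 1
  · simp
  · congr 1
    field_simp

theorem stmt_10 (m : ℕ) (hm : 1 ≤ m) (p : Fin (m + 1) → ℝ)
    (hp : ∀ i, 0 < p i) (hsum : ∑ i, p i = 1)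
    (d : ℕ) (J : Fin d → Fin m) (hJ : Function.Injective J) (ω : ℝ)
    (A : Matrix (Fin (m + 1)) (Fin (m + 1)) ℝ)
    (hA : A = ω • ∑ u : Fin d, ∑ v : Fin d,
      ((if J u = J v then (1 : ℝ) else 0) -
        rRatio m p (J v) / (1 + ∑ w : Fin d, rRatio m p (J w))) •
        epBasis m p (J u) (J v)) :
    (∀ i : ℕ, A ^ (i + 1) = ω ^ i • A) ∧
    (∀ t : ℝ, NormedSpace.exp (t • A) =
      1 + ((Real.exp (ω * t) - 1) / ω) • A) := by
  have hSS := key m p hp d J hJ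
  have hA2 : A * A = ω • A := by
    rw [hA, smul_mul_smul_comm, hSS, ← smul_smul]
  have hpow : ∀ i : ℕ, A ^ (i + 1) = ω ^ i • A := by
    intro i
    induction i with
    | zero => simp
    | succ k ih =>
      rw [pow_succ, ih, smul_mul_assoc, hA2, smul_smul, ← pow_succ]
  refine ⟨hpow, fun t => ?_⟩
  by_cases hω : ω = 0
  · have hA0 : A = 0 := by rw [hA, hω, zero_smul]
    simp [hA0, hω]
  · exact exp_aux A ω hω hpow t
end

section
/- The Metropolis matrix M := I − (1/maxΔ(A)) A, where A := A^{(p;1)}_{(𝒥)} and maxΔ(A) is the maximal diagonal entry of A, is entrywise nonnegative with row sums 1, satisfies pM = p, and has at least one zero entry (i.e., it lies on the boundary of the polytope of p-invariant stochastic matrices). Explicitly maxΔ(A) = (1 + r_{(𝒥)}·1 − min{1, min_u r_{j_u}})/(1 + r_{(𝒥)}·1). -/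
open Matrix

theorem stmt_12 (m : ℕ) (hm : 1 ≤ m) (p : Fin (m + 1) → ℝ)
    (hp : ∀ i, 0 < p i) (hsum : ∑ i, p i = 1)
    (d : ℕ) (J : Fin (d + 1) → Fin m) (hJ : Function.Injective J)
    (A M : Matrix (Fin (m + 1)) (Fin (m + 1)) ℝ)
    (hA : A = ∑ u : Fin (d + 1), ∑ v : Fin (d + 1),
      ((if J u = J v then (1 : ℝ) else 0) -
        rRatio m p (J v) / (1 + ∑ w : Fin (d + 1), rRatio m p (J w))) •
        epBasis m p (J u) (J v))
    (maxD : ℝ)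
    (hmaxD : maxD = Finset.univ.sup' Finset.univ_nonempty (fun i => A i i))
    (hM : M = 1 - maxD⁻¹ • A) :
    (∀ a b, 0 ≤ M a b) ∧
    (∀ a, ∑ b, M a b = 1) ∧
    Matrix.vecMul p M = p ∧
    (∃ a b, M a b = 0) ∧
    maxD = (1 + (∑ u : Fin (d + 1), rRatio m p (J u)) -
        min 1 (Finset.univ.inf' Finset.univ_nonempty fun u => rRatio m p (J u))) /
      (1 + ∑ u : Fin (d + 1), rRatio m p (J u)) := by
  set S : ℝ := 1 + ∑ w : Fin (d + 1), rRatio m p (J w) with hSdef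
  have hr : ∀ u, 0 < rRatio m p (J u) := fun u => div_pos (hp _) (hp _)
  have hS1 : (1:ℝ) < S := by
    have : 0 < ∑ w : Fin (d + 1), rRatio m p (J w) :=
      Finset.sum_pos (fun w _ => hr w) Finset.univ_nonempty
    linarith
  have hS0 : (0:ℝ) < S := by linarith
  have hSne : S ≠ 0 := ne_of_gt hS0
  have hne : ∀ u : Fin (d+1), ((J u).castSucc : Fin (m+1)) ≠ Fin.last m :=
    fun u => Fin.ne_last_of_lt (Fin.castSucc_lt_last _)
  have hAe : ∀ a b, A a b = ∑ u : Fin (d+1), ∑ v : Fin (d+1),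
      ((if u = v then (1:ℝ) else 0) - rRatio m p (J v) / S) *
      (((if a = (J u).castSucc then (1:ℝ) else 0) - rRatio m p (J u) * (if a = Fin.last m then 1 else 0)) *
       ((if b = (J v).castSucc then (1:ℝ) else 0) - (if b = Fin.last m then 1 else 0))) := by
    intro a b
    rw [hA]
    simp [Matrix.sum_apply, epBasis, Matrix.vecMulVec_apply, hJ.eq_iff, mul_assoc]
  -- entry formulas
  have h1 : ∀ u0 v0, A (J u0).castSucc (J v0).castSucc
      = (if u0 = v0 then (1:ℝ) else 0) - rRatio m p (J v0) / S := by
    intro u0 v0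
    rw [hAe]
    simp [Fin.castSucc_inj, hJ.eq_iff, hne u0, hne v0, mul_ite, ite_mul,
      Finset.sum_ite_eq, eq_comm]
  have hsumr : ∑ v : Fin (d+1), rRatio m p (J v) = S - 1 := by rw [hSdef]; ring
  have hne' : ∀ v : Fin (d+1), (Fin.last m : Fin (m+1)) ≠ (J v).castSucc :=
    fun v => (hne v).symm
  have h2 : ∀ u0, A (J u0).castSucc (Fin.last m) = -(1/S) := by
    intro u0
    rw [hAe]
    simp [hne, hne', Fin.castSucc_inj, hJ.eq_iff, mul_ite, ite_mul,
      Finset.sum_ite_eq, Finset.sum_ite_eq', eq_comm, Finset.sum_sub_distrib,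
      ← Finset.sum_div, hsumr]
    field_simp
    ring
  have h3 : ∀ v0, A (Fin.last m) (J v0).castSucc = -(rRatio m p (J v0)/S) := by
    intro v0
    rw [hAe]
    simp only [hne, hne', Fin.castSucc_inj, hJ.eq_iff, if_false, if_true, eq_self_iff_true,
      ite_false, ite_true, sub_zero, zero_sub, mul_one, mul_zero, zero_mul, mul_neg, neg_mul,
      sub_mul, mul_sub, Finset.sum_sub_distrib, Finset.sum_neg_distrib]
    simp only [mul_ite, ite_mul, mul_zero, zero_mul, mul_one, one_mul,
      Finset.sum_ite_eq, Finset.sum_ite_eq', Finset.mem_univ, if_true]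
    rw [← Finset.mul_sum, hsumr]
    field_simp
    ring
  have h4 : A (Fin.last m) (Fin.last m) = (S-1)/S := by
    rw [hAe]
    simp only [hne, hne', Fin.castSucc_inj, hJ.eq_iff, if_false, if_true, eq_self_iff_true,
      ite_false, ite_true, sub_zero, zero_sub, mul_one, mul_zero, zero_mul, mul_neg, neg_mul,
      sub_mul, mul_sub, Finset.sum_sub_distrib, Finset.sum_neg_distrib, neg_neg, neg_sub]
    simp only [mul_ite, ite_mul, mul_zero, zero_mul, mul_one, one_mul,
      Finset.sum_ite_eq, Finset.sum_ite_eq', Finset.mem_univ, if_true]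
    have : ∀ x : Fin (d+1), ∑ x_1 : Fin (d+1), rRatio m p (J x_1) / S * rRatio m p (J x)
        = (S-1)/S * rRatio m p (J x) := by
      intro x
      rw [← Finset.sum_mul, ← Finset.sum_div, hsumr]
    simp only [this]
    rw [← Finset.mul_sum, hsumr]
    field_simp
    ring
  have h0row : ∀ a, (∀ u, a ≠ (J u).castSucc) → a ≠ Fin.last m → ∀ b, A a b = 0 := by
    intro a ha hal b
    rw [hAe]
    simp [ha, hal]
  have h0col : ∀ b, (∀ v, b ≠ (J v).castSucc) → b ≠ Fin.last m → ∀ a, A a b = 0 := by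
    intro b hb hbl a
    rw [hAe]
    simp [hb, hbl]
  -- row sums of A are zero
  have hrowE : ∀ j k a, ∑ b, epBasis m p j k a b = 0 := by
    intro j k a
    simp [epBasis, Matrix.vecMulVec_apply, ← Finset.mul_sum, Finset.sum_sub_distrib,
      Finset.sum_ite_eq]
  have hrowA : ∀ a, ∑ b, A a b = 0 := by
    intro a
    rw [hA]
    simp only [Matrix.sum_apply, Matrix.smul_apply, smul_eq_mul]
    rw [Finset.sum_comm]
    refine Finset.sum_eq_zero fun u _ => ?_
    rw [Finset.sum_comm]
    refine Finset.sum_eq_zero fun v _ => ?_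
    rw [← Finset.mul_sum, hrowE, mul_zero]
  -- p-weighted column sums of A are zero
  have hcolE : ∀ j k b, ∑ a, p a * epBasis m p j k a b = 0 := by
    intro j k b
    have : ∑ a, p a * ((if a = j.castSucc then (1:ℝ) else 0) -
        rRatio m p j * (if a = Fin.last m then 1 else 0)) = 0 := by
      simp [Finset.mul_sum, mul_sub, Finset.sum_sub_distrib, mul_ite,
        Finset.sum_ite_eq', rRatio]
      have hpl := (hp (Fin.last m)).ne'
      field_simp
      ring
    calc ∑ a, p a * epBasis m p j k a b
        = (∑ a, p a * ((if a = j.castSucc then (1:ℝ) else 0) -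
            rRatio m p j * (if a = Fin.last m then 1 else 0))) *
          ((if b = k.castSucc then (1:ℝ) else 0) - (if b = Fin.last m then 1 else 0)) := by
          rw [Finset.sum_mul]
          refine Finset.sum_congr rfl fun a _ => ?_
          simp [epBasis, Matrix.vecMulVec_apply]; ring
      _ = 0 := by rw [this, zero_mul]
  have hcolA : ∀ b, ∑ a, p a * A a b = 0 := by
    intro b
    rw [hA]
    simp only [Matrix.sum_apply, Matrix.smul_apply, smul_eq_mul]
    have : ∀ a, p a * ∑ u : Fin (d+1), ∑ v : Fin (d+1),
        ((if J u = J v then (1:ℝ) else 0) - rRatio m p (J v) / S) * epBasis m p (J u) (J v) a b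
        = ∑ u : Fin (d+1), ∑ v : Fin (d+1),
        ((if J u = J v then (1:ℝ) else 0) - rRatio m p (J v) / S) * (p a * epBasis m p (J u) (J v) a b) := by
      intro a
      rw [Finset.mul_sum]
      refine Finset.sum_congr rfl fun u _ => ?_
      rw [Finset.mul_sum]
      refine Finset.sum_congr rfl fun v _ => ?_
      ring
    simp only [this]
    rw [Finset.sum_comm]
    refine Finset.sum_eq_zero fun u _ => ?_
    rw [Finset.sum_comm]
    refine Finset.sum_eq_zero fun v _ => ?_
    rw [← Finset.mul_sum, hcolE, mul_zero]
  -- maxD value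
  set t : ℝ := min 1 (Finset.univ.inf' Finset.univ_nonempty fun u => rRatio m p (J u)) with htdef
  have ht1 : t ≤ 1 := min_le_left _ _
  have htr : ∀ u, t ≤ rRatio m p (J u) := fun u =>
    le_trans (min_le_right _ _) (Finset.inf'_le _ (Finset.mem_univ u))
  have hdiag_le : ∀ i, A i i ≤ (S - t)/S := by
    intro i
    by_cases hil : i = Fin.last m
    · subst hil; rw [h4]
      rw [div_le_div_iff₀ hS0 hS0]
      nlinarith
    · by_cases hiJ : ∃ u, i = (J u).castSucc
      · obtain ⟨u, rfl⟩ := hiJ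
        rw [h1, if_pos rfl]
        have h' : 1 - rRatio m p (J u)/S = (S - rRatio m p (J u))/S := by
          field_simp
        rw [h', div_le_div_iff₀ hS0 hS0]
        nlinarith [htr u]
      · push_neg at hiJ
        rw [h0row i hiJ hil i]
        apply div_nonneg (by linarith) (le_of_lt hS0)
  have hattain : ∃ i, A i i = (S - t)/S := by
    obtain ⟨u0, _, hu0⟩ := Finset.exists_mem_eq_inf' (Finset.univ_nonempty)
      (fun u => rRatio m p (J u))
    by_cases hc : (Finset.univ.inf' Finset.univ_nonempty fun u => rRatio m p (J u)) ≤ 1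
    · refine ⟨(J u0).castSucc, ?_⟩
      rw [h1, if_pos rfl]
      have : t = rRatio m p (J u0) := by rw [htdef, min_eq_right hc, hu0]
      rw [this]
      field_simp
    · refine ⟨Fin.last m, ?_⟩
      rw [h4]
      have : t = 1 := by rw [htdef, min_eq_left (le_of_not_ge hc)]
      rw [this]
  have hmaxval : maxD = (S - t)/S := by
    rw [hmaxD]
    apply le_antisymm
    · exact Finset.sup'_le _ _ fun i _ => hdiag_le i
    · obtain ⟨i, hi⟩ := hattain
      rw [← hi]
      exact Finset.le_sup' (fun i => A i i) (Finset.mem_univ i)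
  have hmax0 : 0 < maxD := by
    rw [hmaxval]
    apply div_pos ?_ hS0
    linarith
  have hdiag_le' : ∀ i, A i i ≤ maxD := by
    intro i; rw [hmaxD]; exact Finset.le_sup' (fun i => A i i) (Finset.mem_univ i)
  have hoff : ∀ a b, a ≠ b → A a b ≤ 0 := by
    intro a b hab
    by_cases hal : a = Fin.last m
    · subst hal
      by_cases hbJ : ∃ v, b = (J v).castSucc
      · obtain ⟨v, rfl⟩ := hbJ
        rw [h3]
        have := hr v
        have : 0 < rRatio m p (J v) / S := div_pos this hS0
        linarith
      · push_neg at hbJ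
        rw [h0col b hbJ (Ne.symm hab)]
    · by_cases haJ : ∃ u, a = (J u).castSucc
      · obtain ⟨u, rfl⟩ := haJ
        by_cases hbl : b = Fin.last m
        · subst hbl; rw [h2]
          have : 0 < 1/S := by positivity
          linarith
        · by_cases hbJ : ∃ v, b = (J v).castSucc
          · obtain ⟨v, rfl⟩ := hbJ
            have huv : u ≠ v := fun h => hab (by rw [h])
            rw [h1, if_neg huv]
            have : 0 < rRatio m p (J v) / S := div_pos (hr v) hS0
            linarith
          · push_neg at hbJ
            rw [h0col b hbJ hbl]
      · push_neg at haJ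
        rw [h0row a haJ hal]
  -- assemble
  refine ⟨?_, ?_, ?_, ?_, ?_⟩
  · intro a b
    rw [hM]
    simp only [Matrix.sub_apply, Matrix.smul_apply, Matrix.one_apply, smul_eq_mul]
    by_cases hab : a = b
    · subst hab
      rw [if_pos rfl]
      have h := hdiag_le' a
      have : maxD⁻¹ * A a a ≤ maxD⁻¹ * maxD :=
        mul_le_mul_of_nonneg_left h (le_of_lt (inv_pos.mpr hmax0))
      rw [inv_mul_cancel₀ (ne_of_gt hmax0)] at this
      linarith
    · rw [if_neg hab]
      have h := hoff a b hab
      have : maxD⁻¹ * A a b ≤ 0 :=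
        mul_nonpos_of_nonneg_of_nonpos (le_of_lt (inv_pos.mpr hmax0)) h
      linarith
  · intro a
    rw [hM]
    simp only [Matrix.sub_apply, Matrix.smul_apply, Matrix.one_apply, smul_eq_mul,
      Finset.sum_sub_distrib]
    rw [← Finset.mul_sum, hrowA, mul_zero, Finset.sum_ite_eq, if_pos (Finset.mem_univ a)]
    ring
  · funext b
    rw [hM]
    simp only [Matrix.vecMul, dotProduct, Matrix.sub_apply, Matrix.smul_apply,
      Matrix.one_apply, smul_eq_mul, mul_sub, Finset.sum_sub_distrib]
    have : ∑ a, p a * (maxD⁻¹ * A a b) = maxD⁻¹ * ∑ a, p a * A a b := by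
      rw [Finset.mul_sum]; exact Finset.sum_congr rfl fun a _ => by ring
    rw [this, hcolA, mul_zero]
    simp [mul_ite, Finset.sum_ite_eq', Finset.mem_univ]
  · obtain ⟨i, _, hi⟩ := Finset.exists_mem_eq_sup' (Finset.univ_nonempty)
      (fun i => A i i)
    refine ⟨i, i, ?_⟩
    rw [hM]
    simp only [Matrix.sub_apply, Matrix.smul_apply, Matrix.one_apply, smul_eq_mul,
      if_pos rfl]
    rw [show A i i = maxD by rw [hmaxD, hi], inv_mul_cancel₀ (ne_of_gt hmax0)]
    norm_num
  · rw [hmaxval, htdef, hSdef]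
end

section
/- If an irreducible ergodic stochastic matrix P of size n×n has unique invariant probability vector p, then p = 1^T (P − I + 11^T)^{-1}, i.e., the matrix P − I + 11^T is invertible and the row vector of its inverse's column sums equals p. -/
open Matrix

theorem stmt_13 (n : ℕ) (hn : 0 < n) (P : Matrix (Fin n) (Fin n) ℝ)
    (hnonneg : ∀ i j, 0 ≤ P i j) (hrow : ∀ i, ∑ j, P i j = 1)
    (hprim : ∃ k : ℕ, ∀ i j, 0 < (P ^ k) i j)
    (p : Fin n → ℝ) (hp : ∀ i, 0 ≤ p i) (hpsum : ∑ i, p i = 1)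
    (hinv : Matrix.vecMul p P = p)
    (huniq : ∀ q : Fin n → ℝ, (∀ i, 0 ≤ q i) → ∑ i, q i = 1 →
      Matrix.vecMul q P = q → q = p) :
    IsUnit (P - 1 + Matrix.of fun _ _ : Fin n => (1 : ℝ)) ∧
    p = Matrix.vecMul (fun _ => (1 : ℝ))
      (P - 1 + Matrix.of fun _ _ : Fin n => (1 : ℝ))⁻¹ := by
  set A := P - 1 + Matrix.of fun _ _ : Fin n => (1 : ℝ) with hA
  have : Nonempty (Fin n) := ⟨⟨0, hn⟩⟩
  -- p is strictly positive
  obtain ⟨k, hk⟩ := hprim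
  have hpPk : Matrix.vecMul p (P ^ k) = p := by
    clear hk
    induction k with
    | zero => simp
    | succ m ih =>
      rw [pow_succ, ← Matrix.vecMul_vecMul, ih, hinv]
  have hj0 : ∃ j, 0 < p j := by
    by_contra h
    push_neg at h
    have : ∑ i, p i = 0 :=
      Finset.sum_eq_zero fun i _ => le_antisymm (h i) (hp i)
    rw [hpsum] at this; norm_num at this
  obtain ⟨j0, hj0⟩ := hj0
  have hppos : ∀ i, 0 < p i := by
    intro i
    have e : (Matrix.vecMul p (P ^ k)) i = ∑ j, p j * (P ^ k) j i := rfl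
    rw [hpPk] at e
    rw [e]
    have h1 : 0 < p j0 * (P ^ k) j0 i := mul_pos hj0 (hk j0 i)
    have h2 : ∀ j ∈ Finset.univ, 0 ≤ p j * (P ^ k) j i := fun j _ =>
      mul_nonneg (hp j) (le_of_lt (hk j i))
    calc (0:ℝ) < p j0 * (P ^ k) j0 i := h1
      _ ≤ ∑ j, p j * (P ^ k) j i :=
        Finset.single_le_sum h2 (Finset.mem_univ j0)
  -- key: fixed vectors with zero sum are zero
  have key : ∀ x : Fin n → ℝ, Matrix.vecMul x P = x → ∑ i, x i = 0 → x = 0 := by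
    intro x hx hxs
    set m := Finset.univ.inf' Finset.univ_nonempty p with hm
    have hmpos : 0 < m := by
      rw [hm, Finset.lt_inf'_iff]
      exact fun i _ => hppos i
    set S := ∑ i, |x i| with hS
    have hS0 : 0 ≤ S := Finset.sum_nonneg fun i _ => abs_nonneg _
    set t := m / (S + 1) with ht
    have htpos : 0 < t := div_pos hmpos (by linarith)
    set q := fun i => p i + t * x i with hq
    have habs : ∀ i, |x i| ≤ S := fun i =>
      Finset.single_le_sum (fun j _ => abs_nonneg (x j)) (Finset.mem_univ i)
    have hqnn : ∀ i, 0 ≤ q i := by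
      intro i
      have h1 : t * |x i| ≤ t * S := by
        exact mul_le_mul_of_nonneg_left (habs i) (le_of_lt htpos)
      have h2 : t * S < m := by
        rw [ht, div_mul_eq_mul_div, div_lt_iff₀ (by linarith)]
        nlinarith
      have h3 : m ≤ p i := Finset.inf'_le _ (Finset.mem_univ i)
      have h4 : -(t * x i) ≤ t * |x i| := by
        have h5 := neg_abs_le (x i)
        nlinarith
      show 0 ≤ p i + t * x i
      linarith
    have hqsum : ∑ i, q i = 1 := by
      simp only [hq, Finset.sum_add_distrib, ← Finset.mul_sum, hpsum, hxs]
      ring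
    have hqfix : Matrix.vecMul q P = q := by
      funext j
      have e1 : Matrix.vecMul q P j = ∑ i, (p i + t * x i) * P i j := rfl
      have e2 : Matrix.vecMul p P j = ∑ i, p i * P i j := rfl
      have e3 : Matrix.vecMul x P j = ∑ i, x i * P i j := rfl
      rw [e1]
      have : ∑ i, (p i + t * x i) * P i j
          = (∑ i, p i * P i j) + t * ∑ i, x i * P i j := by
        rw [Finset.mul_sum, ← Finset.sum_add_distrib]
        congr 1; funext i; ring
      rw [this, ← e2, ← e3, hinv, hx]
    have := huniq q hqnn hqsum hqfix
    funext i
    have hi := congrFun this i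
    simp only [hq] at hi
    have : t * x i = 0 := by linarith
    have := (mul_eq_zero.mp this).resolve_left (ne_of_gt htpos)
    simpa using this
  -- A is invertible
  have hdet : A.det ≠ 0 := by
    intro hdet0
    obtain ⟨v, hv0, hvA⟩ := Matrix.exists_vecMul_eq_zero_iff.mpr hdet0
    have hAentry : ∀ j, Matrix.vecMul v A j
        = (∑ i, v i * P i j) - v j + ∑ i, v i := by
      intro j
      have : Matrix.vecMul v A j = ∑ i, v i * A i j := rfl
      rw [this]
      have : ∀ i, v i * A i j = v i * P i j - v i * (1 : Matrix (Fin n) (Fin n) ℝ) i j + v i := by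
        intro i
        simp [hA, Matrix.sub_apply, Matrix.add_apply]
        ring
      simp_rw [this]
      rw [Finset.sum_add_distrib, Finset.sum_sub_distrib]
      congr 2
      rw [Finset.sum_eq_single j]
      · simp
      · intro i _ hij; simp [Matrix.one_apply_ne hij]
      · intro h; exact absurd (Finset.mem_univ j) h
    have hsumv : ∑ i, v i = 0 := by
      have hz : ∀ j, (∑ i, v i * P i j) - v j + ∑ i, v i = 0 := by
        intro j
        rw [← hAentry j, hvA]; rfl
      have htot : ∑ j, ((∑ i, v i * P i j) - v j + ∑ i, v i) = 0 := by
        simp [hz]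
      rw [Finset.sum_add_distrib, Finset.sum_sub_distrib, Finset.sum_comm] at htot
      have hrow' : ∀ i, ∑ j, v i * P i j = v i := by
        intro i; rw [← Finset.mul_sum, hrow i, mul_one]
      simp_rw [hrow'] at htot
      simp only [sub_self, zero_add, Finset.sum_const, Finset.card_univ,
        Fintype.card_fin, nsmul_eq_mul] at htot
      have hn' : (0:ℝ) < (n:ℝ) := by exact_mod_cast hn
      have := mul_eq_zero.mp htot
      rcases this with h | h
      · exact absurd h (ne_of_gt hn')
      · exact h
    have hvP : Matrix.vecMul v P = v := by
      funext j
      have hz : Matrix.vecMul v A j = 0 := by rw [hvA]; rfl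
      rw [hAentry j, hsumv] at hz
      have : Matrix.vecMul v P j = ∑ i, v i * P i j := rfl
      rw [this]; linarith
    exact hv0 (key v hvP hsumv)
  have hunit : IsUnit A := by
    rw [Matrix.isUnit_iff_isUnit_det]
    exact isUnit_iff_ne_zero.mpr hdet
  refine ⟨hunit, ?_⟩
  -- p * A = 1ᵀ
  have hpA : Matrix.vecMul p A = fun _ => 1 := by
    funext j
    have e1 : Matrix.vecMul p A j = ∑ i, p i * A i j := rfl
    rw [e1]
    have : ∀ i, p i * A i j = p i * P i j - p i * (1 : Matrix (Fin n) (Fin n) ℝ) i j + p i := by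
      intro i
      simp [hA, Matrix.sub_apply, Matrix.add_apply]
      ring
    simp_rw [this]
    rw [Finset.sum_add_distrib, Finset.sum_sub_distrib]
    have e2 : ∑ i, p i * P i j = p j := by
      have : Matrix.vecMul p P j = ∑ i, p i * P i j := rfl
      rw [← this, hinv]
    have e3 : ∑ i, p i * (1 : Matrix (Fin n) (Fin n) ℝ) i j = p j := by
      rw [Finset.sum_eq_single j]
      · simp
      · intro i _ hij; simp [Matrix.one_apply_ne hij]
      · intro h; exact absurd (Finset.mem_univ j) h
    rw [e2, e3, hpsum]; ring
  have := congrArg (fun v => Matrix.vecMul v A⁻¹) hpA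
  rw [Matrix.vecMul_vecMul, Matrix.mul_nonsing_inv A (isUnit_iff_ne_zero.mpr hdet), Matrix.vecMul_one] at this
  exact this
end

section
/- Suppose f : ℝ → ℝ is a bijective differentiable function such that there exists a function g with f^{-1}(ζ x) − f^{-1}(ζ y) = g(x,y) for all x, y in the domain and all ζ > 0 (i.e., the difference is independent of ζ). Then y · (f^{-1})'(y) is constant, and hence f(x) = exp(cx + c') for some constants c ≠ 0 and c'. -/
open Real

/-- An additive monotone function `ℝ → ℝ` is linear. -/
lemma add_mono_linear (φ : ℝ → ℝ) (hadd : ∀ s t, φ (s + t) = φ s + φ t)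
    (hmono : Monotone φ) : ∀ t, φ t = t * φ 1 := by
  have h0 : φ 0 = 0 := by have := hadd 0 0; simp at this; linarith
  set Φ : ℝ →+ ℝ := AddMonoidHom.mk' φ hadd with hΦ
  have hq : ∀ q : ℚ, φ (q : ℝ) = q * φ 1 := by
    intro q
    have := map_rat_smul Φ q (1 : ℝ)
    simpa [Rat.smul_def, hΦ] using this
  have hφ1 : 0 ≤ φ 1 := by
    have := hmono (show (0:ℝ) ≤ 1 by norm_num); linarith
  intro t
  rcases eq_or_lt_of_le hφ1 with h1 | h1
  · -- φ 1 = 0 : φ is constant 0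
    obtain ⟨q, hqt⟩ := exists_rat_gt t
    obtain ⟨q', hq't⟩ := exists_rat_lt t
    have h₁ : φ t ≤ φ q := hmono hqt.le
    have h₂ : φ (q' : ℝ) ≤ φ t := hmono hq't.le
    rw [hq, ← h1] at h₁ h₂
    simp at h₁ h₂
    rw [← h1]; linarith
  · have hle : φ t ≤ t * φ 1 := by
      by_contra h; push_neg at h
      have ht : t < φ t / φ 1 := (lt_div_iff₀ h1).mpr (by linarith)
      obtain ⟨q, hq1, hq2⟩ := exists_rat_btwn ht
      have := hmono hq1.le
      rw [hq] at this
      have : φ t < φ t := by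
        calc φ t ≤ q * φ 1 := this
          _ < (φ t / φ 1) * φ 1 := by
              exact mul_lt_mul_of_pos_right hq2 h1
          _ = φ t := div_mul_cancel₀ _ h1.ne'
      exact absurd this (lt_irrefl _)
    have hge : t * φ 1 ≤ φ t := by
      by_contra h; push_neg at h
      have ht : φ t / φ 1 < t := (div_lt_iff₀ h1).mpr (by linarith)
      obtain ⟨q, hq1, hq2⟩ := exists_rat_btwn ht
      have := hmono hq2.le
      rw [hq] at this
      have : φ t < φ t := by
        calc φ t = (φ t / φ 1) * φ 1 := (div_mul_cancel₀ _ h1.ne').symm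
          _ < q * φ 1 := mul_lt_mul_of_pos_right hq1 h1
          _ ≤ φ t := this
      exact absurd this (lt_irrefl _)
    linarith

theorem stmt_16 (f finv : ℝ → ℝ) (hpos : ∀ x, 0 < f x)
    (hdiff : Differentiable ℝ f)
    (hinj : Function.Injective f)
    (hsurj : ∀ y : ℝ, 0 < y → ∃ x, f x = y)
    (hleft : ∀ x, finv (f x) = x)
    (hright : ∀ y : ℝ, 0 < y → f (finv y) = y)
    (g : ℝ → ℝ → ℝ)
    (hg : ∀ x y ζ : ℝ, 0 < x → 0 < y → 0 < ζ →
      finv (ζ * x) - finv (ζ * y) = g x y) :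
    (∃ K : ℝ, ∀ y : ℝ, 0 < y → y * deriv finv y = K) ∧
    (∃ c c' : ℝ, c ≠ 0 ∧ ∀ x, f x = Real.exp (c * x + c')) := by
  -- Step 1: multiplicative Cauchy equation for finv on positives
  have hmul : ∀ x y : ℝ, 0 < x → 0 < y →
      finv (x * y) = finv x + finv y - finv 1 := by
    intro x y hx hy
    have h1 := hg x 1 y hx one_pos hy
    have h2 := hg x 1 1 hx one_pos one_pos
    rw [mul_one] at h1 h2
    rw [one_mul] at h2
    have : finv (y * x) - finv y = finv x - finv 1 := by rw [h1, h2]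
    rw [mul_comm x y]; linarith
  -- Step 2: φ is additive
  set φ : ℝ → ℝ := fun t => finv (Real.exp t) - finv 1 with hφdef
  have hadd : ∀ s t, φ (s + t) = φ s + φ t := by
    intro s t
    simp only [hφdef, Real.exp_add]
    rw [hmul _ _ (Real.exp_pos s) (Real.exp_pos t)]
    ring
  -- Step 3: f is strictly monotone or strictly antitone, so φ is monotone or antitone
  have hmono_f := Continuous.strictMono_of_inj hdiff.continuous hinj
  have hfinv_mono : (∀ u v : ℝ, 0 < u → 0 < v → u ≤ v → finv u ≤ finv v) ∨
      (∀ u v : ℝ, 0 < u → 0 < v → u ≤ v → finv v ≤ finv u) := by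
    rcases hmono_f with hm | hm
    · left; intro u v hu hv huv
      by_contra h; push_neg at h
      have := hm h
      rw [hright u hu, hright v hv] at this; linarith
    · right; intro u v hu hv huv
      by_contra h; push_neg at h
      have := hm h
      rw [hright u hu, hright v hv] at this; linarith
  -- Step 4: φ (or -φ) is monotone, hence linear; so finv y = a * log y + finv 1
  have key : ∀ t : ℝ, φ t = t * φ 1 := by
    rcases hfinv_mono with hm | hm
    · exact add_mono_linear φ hadd (fun s t hst => by
        simp only [hφdef]
        have := hm _ _ (Real.exp_pos s) (Real.exp_pos t) (Real.exp_le_exp.mpr hst)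
        linarith)
    · have := add_mono_linear (fun t => -φ t) (fun s t => by show -φ (s + t) = -φ s + -φ t; rw [hadd]; ring)
        (fun s t hst => by
          simp only [hφdef]
          have := hm _ _ (Real.exp_pos s) (Real.exp_pos t) (Real.exp_le_exp.mpr hst)
          simp only [neg_sub]
          linarith)
      intro t
      have h1 := this t
      simp only [mul_neg] at h1
      linarith [h1]
  set a : ℝ := φ 1 with ha
  have hfinv_eq : ∀ y : ℝ, 0 < y → finv y = a * Real.log y + finv 1 := by
    intro y hy
    have := key (Real.log y)
    simp only [hφdef, Real.exp_log hy] at this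
    linarith [this]
  -- a ≠ 0
  have hane : a ≠ 0 := by
    intro h
    have h1 := hfinv_eq 1 one_pos
    have h2 := hfinv_eq 2 (by norm_num)
    rw [h] at h1 h2
    simp at h1 h2
    have : f (finv 1) = f (finv 2) := by rw [h2]
    rw [hright 1 one_pos, hright 2 (by norm_num)] at this
    norm_num at this
  constructor
  · -- derivative claim
    refine ⟨a, fun y hy => ?_⟩
    have hev : finv =ᶠ[nhds y] fun z => a * Real.log z + finv 1 := by
      filter_upwards [IsOpen.mem_nhds isOpen_Ioi hy] with z hz
      exact hfinv_eq z hz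
    rw [hev.deriv_eq]
    have hd : HasDerivAt (fun z => a * Real.log z + finv 1) (a * y⁻¹) y :=
      ((Real.hasDerivAt_log hy.ne').const_mul a).add_const _
    rw [hd.deriv]
    field_simp
  · -- exponential form
    refine ⟨1 / a, -finv 1 / a, by simpa using hane, fun x => ?_⟩
    have h1 : finv (f x) = a * Real.log (f x) + finv 1 := hfinv_eq _ (hpos x)
    rw [hleft x] at h1
    have hlog : Real.log (f x) = 1 / a * x + -finv 1 / a := by
      field_simp
      linarith
    rw [← hlog, Real.exp_log (hpos x)]
end

section
/- The maps F_H : (p, t_∞) ↦ (E, β^{-1}) and F_t : (E, β^{-1}) ↦ (p, t_∞) defined by β^{-1} = (t_∞ ‖p‖)^{-1} (∑_k [(1/n)∑_j log(p_j/p_k)]² + 1)^{-1/2}, E_k = β^{-1}·(1/n)∑_j log(p_j/p_k), and p_k = e^{−βE_k}/∑_j e^{−βE_j}, t_∞ = ‖p‖^{-1}(‖E‖² + β^{-2})^{-1/2}, are mutually inverse bijections between {(p,t_∞) : p strictly positive probability vector on [n], t_∞ > 0} and {(E,β^{-1}) : ∑_j E_j = 0, β > 0}. -/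
/-- Statistical descriptions: strictly positive probability vectors together
with a positive timescale. -/
def statSet (n : ℕ) : Set ((Fin n → ℝ) × ℝ) :=
  {x | (∀ j, 0 < x.1 j) ∧ (∑ j, x.1 j = 1) ∧ 0 < x.2}

/-- Physical descriptions: zero-mean energy vectors together with a positive
(inverse) temperature `β⁻¹`. -/
def physSet (n : ℕ) : Set ((Fin n → ℝ) × ℝ) :=
  {y | (∑ j, y.1 j = 0) ∧ 0 < y.2}

/-- `F_H : (p, t_∞) ↦ (E, β⁻¹)`. -/
noncomputable def FH (n : ℕ) (x : (Fin n → ℝ) × ℝ) : (Fin n → ℝ) × ℝ :=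
  let p := x.1
  let tInf := x.2
  let βinv := (tInf * Real.sqrt (∑ k, p k ^ 2))⁻¹ *
    (Real.sqrt ((∑ k, ((1 / (n : ℝ)) * ∑ j, Real.log (p j / p k)) ^ 2) + 1))⁻¹
  (fun k => βinv * ((1 / (n : ℝ)) * ∑ j, Real.log (p j / p k)), βinv)

/-- `F_t : (E, β⁻¹) ↦ (p, t_∞)`. -/
noncomputable def Ft (n : ℕ) (y : (Fin n → ℝ) × ℝ) : (Fin n → ℝ) × ℝ :=
  let E := y.1
  let βinv := y.2
  let p : Fin n → ℝ := fun k =>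
    Real.exp (-(βinv⁻¹ * E k)) / ∑ j, Real.exp (-(βinv⁻¹ * E j))
  (p, (Real.sqrt (∑ k, p k ^ 2))⁻¹ *
    (Real.sqrt ((∑ k, E k ^ 2) + βinv ^ 2))⁻¹)

private lemma Lred {n : ℕ} (hn : 1 ≤ n) (p : Fin n → ℝ) (hp : ∀ j, 0 < p j) (k : Fin n) :
    (1 / (n : ℝ)) * ∑ j, Real.log (p j / p k)
      = (1 / (n : ℝ)) * (∑ j, Real.log (p j)) - Real.log (p k) := by
  have hn0 : (n : ℝ) ≠ 0 := Nat.cast_ne_zero.mpr (by omega)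
  have h1 : ∀ j, Real.log (p j / p k) = Real.log (p j) - Real.log (p k) :=
    fun j => Real.log_div (hp j).ne' (hp k).ne'
  rw [Finset.sum_congr rfl fun j _ => h1 j, Finset.sum_sub_distrib, Finset.sum_const,
    Finset.card_univ, Fintype.card_fin, nsmul_eq_mul]
  field_simp

private lemma key1 {n : ℕ} (hn : 1 ≤ n) {x : (Fin n → ℝ) × ℝ} (hx : x ∈ statSet n) :
    FH n x ∈ physSet n ∧ Ft n (FH n x) = x := by
  obtain ⟨hp, hsum, ht⟩ := hx
  set p := x.1 with hpdef
  set t := x.2 with htdef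
  have hn0 : (n : ℝ) ≠ 0 := Nat.cast_ne_zero.mpr (by omega)
  have hne : (Finset.univ : Finset (Fin n)).Nonempty := ⟨⟨0, hn⟩, Finset.mem_univ _⟩
  set S := ∑ j, Real.log (p j) with hSdef
  set L : Fin n → ℝ := fun k => (1 / (n : ℝ)) * ∑ j, Real.log (p j / p k) with hLdef
  have hL : ∀ k, L k = (1 / (n : ℝ)) * S - Real.log (p k) := fun k => Lred hn p hp k
  have hsq : 0 < ∑ k, p k ^ 2 :=
    Finset.sum_pos (fun k _ => pow_pos (hp k) 2) hne
  have h1 : 0 < Real.sqrt (∑ k, p k ^ 2) := Real.sqrt_pos.mpr hsq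
  have h2 : 0 < Real.sqrt ((∑ k, L k ^ 2) + 1) := Real.sqrt_pos.mpr (by positivity)
  set b := (t * Real.sqrt (∑ k, p k ^ 2))⁻¹ * (Real.sqrt ((∑ k, L k ^ 2) + 1))⁻¹ with hbdef
  have hb : 0 < b := by positivity
  have hFH : FH n x = (fun k => b * L k, b) := rfl
  have hSL : ∑ k, L k = 0 := by
    rw [Finset.sum_congr rfl fun k _ => hL k, Finset.sum_sub_distrib, Finset.sum_const,
      Finset.card_univ, Fintype.card_fin, nsmul_eq_mul, hSdef]
    field_simp
    ring
  have hmem : FH n x ∈ physSet n := by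
    rw [hFH]
    refine ⟨?_, hb⟩
    simp only [← Finset.mul_sum, hSL, mul_zero]
  refine ⟨hmem, ?_⟩
  -- now Ft (FH x) = x
  have hcanc : ∀ k, b⁻¹ * (b * L k) = L k := fun k => inv_mul_cancel_left₀ hb.ne' _
  have hexp : ∀ k, Real.exp (-(L k)) = p k * Real.exp (-((1 / (n : ℝ)) * S)) := by
    intro k
    rw [hL k, neg_sub, Real.exp_sub, Real.exp_log (hp k), Real.exp_neg, div_eq_mul_inv]
  have hc : 0 < Real.exp (-((1 / (n : ℝ)) * S)) := Real.exp_pos _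
  have hZ : ∑ j, Real.exp (-(L j)) = Real.exp (-((1 / (n : ℝ)) * S)) := by
    rw [Finset.sum_congr rfl fun j _ => hexp j, ← Finset.sum_mul, hsum, one_mul]
  have hpfix : (fun k => Real.exp (-(b⁻¹ * (b * L k))) / ∑ j, Real.exp (-(b⁻¹ * (b * L j)))) = p := by
    funext k
    simp only [hcanc]
    rw [hZ, hexp k, mul_div_assoc, div_self hc.ne', mul_one]
  have hEsq : (∑ k, (b * L k) ^ 2) + b ^ 2 = b ^ 2 * ((∑ k, L k ^ 2) + 1) := by
    rw [mul_add, Finset.mul_sum, mul_one]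
    congr 1
    exact Finset.sum_congr rfl fun k _ => by ring
  have hsqrt2 : Real.sqrt ((∑ k, (b * L k) ^ 2) + b ^ 2)
      = b * Real.sqrt ((∑ k, L k ^ 2) + 1) := by
    rw [hEsq, Real.sqrt_mul (sq_nonneg b), Real.sqrt_sq hb.le]
  have hFt : Ft n (FH n x) =
      ((fun k => Real.exp (-(b⁻¹ * (b * L k))) / ∑ j, Real.exp (-(b⁻¹ * (b * L j)))),
       (Real.sqrt (∑ k, (Real.exp (-(b⁻¹ * (b * L k))) / ∑ j, Real.exp (-(b⁻¹ * (b * L j)))) ^ 2))⁻¹ *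
       (Real.sqrt ((∑ k, (b * L k) ^ 2) + b ^ 2))⁻¹) := rfl
  rw [hFt]
  have hx2 : x = (p, t) := rfl
  rw [hx2]
  have hsum2 : (∑ k, (Real.exp (-(b⁻¹ * (b * L k))) / ∑ j, Real.exp (-(b⁻¹ * (b * L j)))) ^ 2)
      = ∑ k, p k ^ 2 := Finset.sum_congr rfl fun k _ => by rw [congrFun hpfix k]
  refine Prod.ext ?_ ?_
  · exact hpfix
  · show (Real.sqrt _)⁻¹ * (Real.sqrt _)⁻¹ = t
    rw [hsum2, hsqrt2, hbdef]
    field_simp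

private lemma key2 {n : ℕ} (hn : 1 ≤ n) {y : (Fin n → ℝ) × ℝ} (hy : y ∈ physSet n) :
    Ft n y ∈ statSet n ∧ FH n (Ft n y) = y := by
  obtain ⟨hE, hv⟩ := hy
  set E := y.1 with hEdef
  set v := y.2 with hvdef
  have hn0 : (n : ℝ) ≠ 0 := Nat.cast_ne_zero.mpr (by omega)
  have hne : (Finset.univ : Finset (Fin n)).Nonempty := ⟨⟨0, hn⟩, Finset.mem_univ _⟩
  set q : Fin n → ℝ := fun k => Real.exp (-(v⁻¹ * E k)) with hqdef
  have hq : ∀ k, 0 < q k := fun k => Real.exp_pos _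
  have hZ : 0 < ∑ j, q j := Finset.sum_pos (fun j _ => hq j) hne
  set P : Fin n → ℝ := fun k => q k / ∑ j, q j with hPdef
  have hPpos : ∀ k, 0 < P k := fun k => div_pos (hq k) hZ
  have hPsum : ∑ k, P k = 1 := by
    rw [hPdef]
    rw [← Finset.sum_div, div_self hZ.ne']
  have hsqP : 0 < ∑ k, P k ^ 2 := Finset.sum_pos (fun k _ => pow_pos (hPpos k) 2) hne
  have hX : 0 < (∑ k, E k ^ 2) + v ^ 2 :=
    add_pos_of_nonneg_of_pos (Finset.sum_nonneg fun k _ => sq_nonneg _) (pow_pos hv 2)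
  have h1 : 0 < Real.sqrt (∑ k, P k ^ 2) := Real.sqrt_pos.mpr hsqP
  have h2 : 0 < Real.sqrt ((∑ k, E k ^ 2) + v ^ 2) := Real.sqrt_pos.mpr hX
  have hFt : Ft n y = (P, (Real.sqrt (∑ k, P k ^ 2))⁻¹ *
      (Real.sqrt ((∑ k, E k ^ 2) + v ^ 2))⁻¹) := rfl
  set t := (Real.sqrt (∑ k, P k ^ 2))⁻¹ * (Real.sqrt ((∑ k, E k ^ 2) + v ^ 2))⁻¹ with htdef
  have ht : 0 < t := by positivity
  have hmem : Ft n y ∈ statSet n := by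
    rw [hFt]
    exact ⟨hPpos, hPsum, ht⟩
  refine ⟨hmem, ?_⟩
  -- log ratios
  have hlog : ∀ j k : Fin n, Real.log (P j / P k) = v⁻¹ * E k - v⁻¹ * E j := by
    intro j k
    have hratio : P j / P k = q j / q k := by
      rw [hPdef]
      field_simp
    rw [hratio, Real.log_div (hq j).ne' (hq k).ne', hqdef]
    simp [Real.log_exp]
    ring
  have hLk : ∀ k, (1 / (n : ℝ)) * ∑ j, Real.log (P j / P k) = v⁻¹ * E k := by
    intro k
    rw [Finset.sum_congr rfl fun j _ => hlog j k, Finset.sum_sub_distrib, Finset.sum_const,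
      Finset.card_univ, Fintype.card_fin, nsmul_eq_mul, ← Finset.mul_sum, hE, mul_zero, sub_zero]
    field_simp
  have hLsq : (∑ k, (v⁻¹ * E k) ^ 2) + 1 = (v⁻¹) ^ 2 * ((∑ k, E k ^ 2) + v ^ 2) := by
    rw [mul_add, Finset.mul_sum]
    have hvv : (v⁻¹) ^ 2 * v ^ 2 = 1 := by
      field_simp
    rw [hvv]
    congr 1
    exact Finset.sum_congr rfl fun k _ => by ring
  have hsqrt : Real.sqrt ((∑ k, (v⁻¹ * E k) ^ 2) + 1)
      = v⁻¹ * Real.sqrt ((∑ k, E k ^ 2) + v ^ 2) := by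
    rw [hLsq, Real.sqrt_mul (sq_nonneg _), Real.sqrt_sq (inv_pos.mpr hv).le]
  have hFH : FH n (Ft n y) = (fun k => ((t * Real.sqrt (∑ k, P k ^ 2))⁻¹ *
      (Real.sqrt ((∑ k, ((1 / (n : ℝ)) * ∑ j, Real.log (P j / P k)) ^ 2) + 1))⁻¹) *
      ((1 / (n : ℝ)) * ∑ j, Real.log (P j / P k)),
      (t * Real.sqrt (∑ k, P k ^ 2))⁻¹ *
      (Real.sqrt ((∑ k, ((1 / (n : ℝ)) * ∑ j, Real.log (P j / P k)) ^ 2) + 1))⁻¹) := by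
    rw [hFt]
    rfl
  have hb' : (t * Real.sqrt (∑ k, P k ^ 2))⁻¹ *
      (Real.sqrt ((∑ k, ((1 / (n : ℝ)) * ∑ j, Real.log (P j / P k)) ^ 2) + 1))⁻¹ = v := by
    have hre : (∑ k, ((1 / (n : ℝ)) * ∑ j, Real.log (P j / P k)) ^ 2)
        = ∑ k, (v⁻¹ * E k) ^ 2 := Finset.sum_congr rfl fun k _ => by rw [hLk k]
    rw [hre, hsqrt, htdef]
    field_simp
  rw [hFH]
  have hy2 : y = (E, v) := rfl
  rw [hy2]
  refine Prod.ext ?_ ?_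
  · funext k
    simp only [hb', hLk k]
    rw [← mul_assoc, mul_inv_cancel₀ hv.ne', one_mul]
  · exact hb'

theorem stmt_19 (n : ℕ) (hn : 1 ≤ n) :
    Set.BijOn (FH n) (statSet n) (physSet n) ∧
    Set.BijOn (Ft n) (physSet n) (statSet n) ∧
    (∀ x ∈ statSet n, Ft n (FH n x) = x) ∧
    (∀ y ∈ physSet n, FH n (Ft n y) = y) := by
  have h1 : Set.MapsTo (FH n) (statSet n) (physSet n) := fun x hx => (key1 hn hx).1
  have h2 : Set.MapsTo (Ft n) (physSet n) (statSet n) := fun y hy => (key2 hn hy).1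
  have h3 : ∀ x ∈ statSet n, Ft n (FH n x) = x := fun x hx => (key1 hn hx).2
  have h4 : ∀ y ∈ physSet n, FH n (Ft n y) = y := fun y hy => (key2 hn hy).2
  have inv : Set.InvOn (Ft n) (FH n) (statSet n) (physSet n) := ⟨h3, h4⟩
  exact ⟨inv.bijOn h1 h2, inv.symm.bijOn h2 h1, h3, h4⟩
end
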